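/- Let t_n = [z^n] C(z(1-z+z^2)) and let h_n = t_n - t_{n-1} for n ≥ 1 (coefficients counting peak-less MAP not ending in H, shifted). Then for all n ≥ 1: t_n = t_{n-1} + sum_{k=0}^{n-3} t_k * t_{n-k-3} + sum_{k=2}^{n-1} (t_k - t_{k-1}) * t_{n-k-1}, with empty sums equal to 0. -/

import Mathlib

open PowerSeries

/-- With `t_n = [z^n] C(z(1-z+z^2))` the number of peak-less Motzkin paths with air
pockets of length `n`, for all `n ≥ 1`:
`t_n = t_{n-1} + ∑_{k=0}^{n-3} t_k t_{n-k-3} + ∑_{k=2}^{n-1} (t_k - t_{k-1}) t_{n-k-1}`. -/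
theorem peakless_MAP_recurrence (T : PowerSeries ℚ)
    (hT : (X - X^2 + X^3) * T^2 + 1 = T)
    (t : ℕ → ℚ) (ht : ∀ n, t n = coeff n T) :
    ∀ n : ℕ, 1 ≤ n →
      t n = t (n - 1) + (∑ k ∈ Finset.range (n - 2), t k * t (n - k - 3)) +
        ∑ k ∈ Finset.Icc 2 (n - 1), (t k - t (k - 1)) * t (n - k - 1) := by
  have hsplit : (X - X^2 + X^3) * T^2 = X^1 * T^2 - X^2 * T^2 + X^3 * T^2 := by ring
  have hS : ∀ m : ℕ, (coeff m) (T^2) = ∑ k ∈ Finset.range (m+1), t k * t (m-k) := by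
    intro m
    rw [sq, coeff_mul, Finset.Nat.sum_antidiagonal_eq_sum_range_succ_mk]
    exact Finset.sum_congr rfl fun k _ => by rw [ht, ht]
  have hcoeff : ∀ n : ℕ, t n =
      (if 1 ≤ n then (coeff (n-1)) (T^2) else 0)
      - (if 2 ≤ n then (coeff (n-2)) (T^2) else 0)
      + (if 3 ≤ n then (coeff (n-3)) (T^2) else 0)
      + (if n = 0 then 1 else 0) := by
    intro n
    have h := congrArg (coeff n) hT
    rw [map_add, hsplit, map_add, map_sub, coeff_X_pow_mul', coeff_X_pow_mul',
      coeff_X_pow_mul', coeff_one] at h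
    rw [ht, ← h]
  have ht0 : t 0 = 1 := by
    have := hcoeff 0; simpa using this
  have ht1 : t 1 = 1 := by
    have h := hcoeff 1
    rw [if_pos (by norm_num), if_neg (by norm_num), if_neg (by norm_num),
      if_neg (by norm_num), show (1:ℕ)-1 = 0 from rfl, hS] at h
    simpa [ht0] using h
  intro n hn
  match n, hn with
  | 1, _ =>
      simp [ht0, ht1]
  | 2, _ =>
      have h2 : t 2 = 1 := by
        have h := hcoeff 2
        rw [if_pos (by norm_num), if_pos (by norm_num), if_neg (by norm_num),
          if_neg (by norm_num), show (2:ℕ)-1 = 1 from rfl, show (2:ℕ)-2 = 0 from rfl,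
          hS, hS] at h
        rw [h]
        simp [Finset.sum_range_succ, ht0, ht1]
      simp [h2, ht1]
  | (m+3), _ =>
      have key : t (m+3) = (coeff (m+2)) (T^2) - (coeff (m+1)) (T^2)
          + (coeff m) (T^2) := by
        have h := hcoeff (m+3)
        rw [if_pos (by omega), if_pos (by omega), if_pos (by omega), if_neg (by omega),
          show m + 3 - 1 = m + 2 from by omega, show m + 3 - 2 = m + 1 from by omega,
          show m + 3 - 3 = m from by omega] at h
        rw [h]; ring
      have en1 : m + 3 - 1 = m + 2 := by omega
      have en2 : m + 3 - 2 = m + 1 := by omega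
      rw [en1, en2, key, hS, hS, hS]
      -- rewrite the Icc sum as a range sum
      have hIcc : ∑ k ∈ Finset.Icc 2 (m+2), (t k - t (k-1)) * t (m+3-k-1)
          = ∑ j ∈ Finset.range (m+1), (t (j+2) - t (j+1)) * t (m-j) := by
        rw [← Finset.Ico_add_one_right_eq_Icc, Finset.sum_Ico_eq_sum_range]
        refine Finset.sum_congr (by rw [show m+2+1-2 = m+1 from by omega]) fun j _ => ?_
        rw [show 2 + j = j + 2 from by omega, show j + 2 - 1 = j + 1 from by omega,
          show m + 3 - (j + 2) - 1 = m - j from by omega]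
      rw [hIcc]
      have hsub : ∑ k ∈ Finset.range (m+1), t k * t (m+3-k-3)
          = ∑ k ∈ Finset.range (m+1), t k * t (m-k) :=
        Finset.sum_congr rfl fun k _ => by
          have : m + 3 - k - 3 = m - k := by omega
          rw [this]
      rw [hsub]
      -- peel off the first terms of the big sums
      have P2 : ∑ k ∈ Finset.range (m+3), t k * t (m+2-k)
          = (∑ k ∈ Finset.range (m+1), t (k+2) * t (m-k)) + t 1 * t (m+1)
            + t 0 * t (m+2) := by
        rw [Finset.sum_range_succ' (fun k => t k * t (m+2-k)) (m+2),
          Finset.sum_range_succ' (fun k => t (k+1) * t (m+2-(k+1))) (m+1),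
          Finset.sum_congr rfl (fun k (_ : k ∈ Finset.range (m+1)) =>
            show t (k+1+1) * t (m+2-(k+1+1)) = t (k+2) * t (m-k) from by
              rw [show k+1+1 = k+2 from by omega, show m+2-(k+1+1) = m-k from by omega])]
        norm_num
      have P1 : ∑ k ∈ Finset.range (m+2), t k * t (m+1-k)
          = (∑ k ∈ Finset.range (m+1), t (k+1) * t (m-k)) + t 0 * t (m+1) := by
        rw [Finset.sum_range_succ' (fun k => t k * t (m+1-k)) (m+1),
          Finset.sum_congr rfl (fun k (_ : k ∈ Finset.range (m+1)) =>
            show t (k+1) * t (m+1-(k+1)) = t (k+1) * t (m-k) from by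
              rw [show m+1-(k+1) = m-k from by omega])]
        norm_num
      rw [P2, P1, ht0, ht1]
      have B : ∑ j ∈ Finset.range (m+1), (t (j+2) - t (j+1)) * t (m-j)
          = (∑ k ∈ Finset.range (m+1), t (k+2) * t (m-k))
            - ∑ k ∈ Finset.range (m+1), t (k+1) * t (m-k) := by
        rw [← Finset.sum_sub_distrib]
        exact Finset.sum_congr rfl fun j _ => by ring
      rw [B]
      ring
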